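/- arXiv:1605.05598 — 3 statements merged into one kernel-verified Lean document; each statement's English description precedes it below -/
import Mathlib

section
/- Consider the discrete-time quantum walk search on the n×n torus grid (N = n² vertices). The state space consists of functions ψ : (Fin n × Fin n × Fin 4) → ℂ, with coin directions labelled ↑,↓,←,→. Suppose the marked set is M = {(i,j), (i+1,j)} (indices mod n, so the two vertices are horizontally adjacent), with n ≥ 3. Let φ be the state whose amplitude is a at every basis state |x,y,c⟩ except |i,j,→⟩ and |i+1,j,←⟩, which both have amplitude −3a; i.e. φ = a·Σ_{x,y,c}|x,y,c⟩ − 4a|i,j,→⟩ − 4a|i+1,j,←⟩. Then φ is fixed by one step of the search algorithm: U′φ = φ, where U′ = S·(I⊗C)·(Q⊗I). -/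
/-- Discrete-time quantum walk search on the `n × n` torus grid.
Basis states are `((x, y), c)` with coin directions `0 = ↑`, `1 = ↓`, `2 = ←`, `3 = →`.
`flip` sends a dart to the reversed dart at the adjacent vertex (flip-flop structure). -/
noncomputable def GridWalk.flip (n : ℕ) [NeZero n] (e : (Fin n × Fin n) × Fin 4) :
    (Fin n × Fin n) × Fin 4 :=
  if e.2 = 0 then ((e.1.1, e.1.2 + 1), 1)
  else if e.2 = 1 then ((e.1.1, e.1.2 - 1), 0)
  else if e.2 = 2 then ((e.1.1 - 1, e.1.2), 3)
  else ((e.1.1 + 1, e.1.2), 2)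

/-- The flip-flop shift operator `S`. -/
noncomputable def GridWalk.shift (n : ℕ) [NeZero n] (ψ : (Fin n × Fin n) × Fin 4 → ℂ) :
    (Fin n × Fin n) × Fin 4 → ℂ :=
  fun e => ψ (GridWalk.flip n e)

/-- The Grover coin `I ⊗ C`. -/
noncomputable def GridWalk.coin (n : ℕ) (ψ : (Fin n × Fin n) × Fin 4 → ℂ) :
    (Fin n × Fin n) × Fin 4 → ℂ :=
  fun e => (1 / 2 : ℂ) * (∑ c' : Fin 4, ψ (e.1, c')) - ψ e

/-- The query `Q ⊗ I`, flipping the sign at marked vertices. -/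
noncomputable def GridWalk.query (n : ℕ) (M : Finset (Fin n × Fin n))
    (ψ : (Fin n × Fin n) × Fin 4 → ℂ) : (Fin n × Fin n) × Fin 4 → ℂ :=
  fun e => if e.1 ∈ M then -ψ e else ψ e

/-- One step of the search algorithm, `U' = S · (I ⊗ C) · (Q ⊗ I)`. -/
noncomputable def GridWalk.step (n : ℕ) [NeZero n] (M : Finset (Fin n × Fin n))
    (ψ : (Fin n × Fin n) × Fin 4 → ℂ) : (Fin n × Fin n) × Fin 4 → ℂ :=
  GridWalk.shift n (GridWalk.coin n (GridWalk.query n M ψ))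

set_option maxHeartbeats 1000000 in
/-- For two horizontally adjacent marked vertices `(i, j)` and `(i+1, j)` on the `n × n`
torus, the state with amplitude `-3a` on the two darts of the shared edge
(`|i, j, →⟩` and `|i+1, j, ←⟩`) and amplitude `a` elsewhere is fixed by a step
of the search algorithm. -/
theorem grid_two_adjacent_marked_stationary (n : ℕ) [NeZero n] (hn : 3 ≤ n)
    (i j : Fin n) (a : ℂ) :
    GridWalk.step n {(i, j), (i + 1, j)}
      (fun e => if e = ((i, j), (3 : Fin 4)) ∨ e = ((i + 1, j), (2 : Fin 4))
        then -3 * a else a)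
    = fun e => if e = ((i, j), (3 : Fin 4)) ∨ e = ((i + 1, j), (2 : Fin 4))
        then -3 * a else a := by
  have hone : (1 : Fin n) ≠ 0 := by
    intro h
    have := congrArg Fin.val h
    open Fin.NatCast in rw [show (1 : Fin n) = ((1:ℕ) : Fin n) by norm_num, Fin.val_natCast, Fin.val_zero,
      Nat.mod_eq_of_lt (by omega)] at this
    omega
  have htwo : (2 : Fin n) ≠ 0 := by
    intro h
    have := congrArg Fin.val h
    open Fin.NatCast in rw [show (2 : Fin n) = ((2:ℕ) : Fin n) by norm_num, Fin.val_natCast, Fin.val_zero,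
      Nat.mod_eq_of_lt (by omega)] at this
    omega
  have hadd : ∀ k : Fin n, k + 1 ≠ k := by
    intro k h; apply hone
    have := congrArg (· - k) h
    simpa using this
  have key : ∀ p : Fin n × Fin n, ∀ c : Fin 4,
      GridWalk.coin n (GridWalk.query n {(i, j), (i + 1, j)}
        (fun e => if e = ((i, j), (3 : Fin 4)) ∨ e = ((i + 1, j), (2 : Fin 4))
          then -3 * a else a)) (p, c)
      = if p = (i, j) ∨ p = (i + 1, j)
          then (if (p, c) = ((i, j), (3 : Fin 4)) ∨ (p, c) = ((i + 1, j), (2 : Fin 4))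
            then -3 * a else a)
          else a := by
    intro p c
    have hne : ¬ ((i : Fin n), j) = (i + 1, j) := by
      simp only [Prod.mk.injEq, and_true]
      exact fun h => hadd i h.symm
    by_cases h1 : p = (i, j)
    · subst h1
      simp only [GridWalk.coin, GridWalk.query, Finset.mem_insert, Finset.mem_singleton,
        Fin.sum_univ_four, Prod.mk.injEq, Fin.isValue, true_or, if_true, hne, true_and,
        and_true, eq_self_iff_true, or_false, false_or, if_pos]
      have e0 : ¬ (((i, j), (0 : Fin 4)) = ((i, j), (3 : Fin 4)) ∨
          ((i, j), (0 : Fin 4)) = ((i + 1, j), (2 : Fin 4))) := by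
        simp [Prod.ext_iff, hne]
      have e1 : ¬ (((i, j), (1 : Fin 4)) = ((i, j), (3 : Fin 4)) ∨
          ((i, j), (1 : Fin 4)) = ((i + 1, j), (2 : Fin 4))) := by
        simp [Prod.ext_iff, hne]
      have e2 : ¬ (((i, j), (2 : Fin 4)) = ((i, j), (3 : Fin 4)) ∨
          ((i, j), (2 : Fin 4)) = ((i + 1, j), (2 : Fin 4))) := by
        simp [Prod.ext_iff]
        omega
      have e3 : (((i, j), (3 : Fin 4)) = ((i, j), (3 : Fin 4)) ∨
          ((i, j), (3 : Fin 4)) = ((i + 1, j), (2 : Fin 4))) := Or.inl rfl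
      simp only [false_and, and_false, or_false, false_or]
      simp only [Fin.isValue, show ((0:Fin 4) = 3) = False from by simp, show ((1:Fin 4) = 3) = False from by simp,
        show ((2:Fin 4) = 3) = False from by simp, if_false]
      split_ifs <;> ring
    · by_cases h2 : p = (i + 1, j)
      · subst h2
        simp only [GridWalk.coin, GridWalk.query, Finset.mem_insert, Finset.mem_singleton,
          Fin.sum_univ_four, Prod.mk.injEq, Fin.isValue, or_true, if_true, true_and,
          and_true, eq_self_iff_true]
        have hne' : ¬ ((i + 1 : Fin n), j) = (i, j) := fun h => hne h.symm
        have e0 : ¬ (((i + 1, j), (0 : Fin 4)) = ((i, j), (3 : Fin 4)) ∨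
            ((i + 1, j), (0 : Fin 4)) = ((i + 1, j), (2 : Fin 4))) := by
          simp [Prod.ext_iff]
        have e1 : ¬ (((i + 1, j), (1 : Fin 4)) = ((i, j), (3 : Fin 4)) ∨
            ((i + 1, j), (1 : Fin 4)) = ((i + 1, j), (2 : Fin 4))) := by
          simp [Prod.ext_iff]
        have e2 : (((i + 1, j), (2 : Fin 4)) = ((i, j), (3 : Fin 4)) ∨
            ((i + 1, j), (2 : Fin 4)) = ((i + 1, j), (2 : Fin 4))) := Or.inr rfl
        have e3 : ¬ (((i + 1, j), (3 : Fin 4)) = ((i, j), (3 : Fin 4)) ∨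
            ((i + 1, j), (3 : Fin 4)) = ((i + 1, j), (2 : Fin 4))) := by
          simp [Prod.ext_iff]
          omega
        simp only [hadd i, false_and, and_false, or_false, false_or, if_false,
          show ((0:Fin 4) = 2) = False from by simp, show ((1:Fin 4) = 2) = False from by simp,
          show ((3:Fin 4) = 2) = False from by simp, show ((2:Fin 4) = 2) = True from by simp,
          if_true]
        split_ifs <;> ring
      · have hmem : ¬ (p = (i, j) ∨ p = (i + 1, j)) := by tauto
        simp only [GridWalk.coin, GridWalk.query, Finset.mem_insert, Finset.mem_singleton,
          Fin.sum_univ_four, if_neg hmem]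
        have hv : ∀ c' : Fin 4, ¬ ((p, c') = ((i, j), (3 : Fin 4)) ∨
            (p, c') = ((i + 1, j), (2 : Fin 4))) := by
          intro c' h
          rcases h with h | h
          · exact h1 (congrArg Prod.fst h)
          · exact h2 (congrArg Prod.fst h)
        rw [if_neg (hv 0), if_neg (hv 1), if_neg (hv 2), if_neg (hv 3), if_neg (hv c)]
        ring
  have hn1 : ¬ n = 1 := by omega
  funext e
  obtain ⟨⟨x, y⟩, c⟩ := e
  show GridWalk.coin n _ (GridWalk.flip n ((x, y), c)) = _
  fin_cases c
  · -- c = 0, flip = ((x, y+1), 1)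
    rw [show GridWalk.flip n ((x, y), (⟨0, by norm_num⟩ : Fin 4)) = ((x, y + 1), 1) from rfl, key]
    simp [hn1, Prod.ext_iff]
  · rw [show GridWalk.flip n ((x, y), (⟨1, by norm_num⟩ : Fin 4)) = ((x, y - 1), 0) from rfl, key]
    simp [hn1, Prod.ext_iff]
  · -- c = 2, flip = ((x-1, y), 3)
    rw [show GridWalk.flip n ((x, y), (⟨2, by norm_num⟩ : Fin 4)) = ((x - 1, y), 3) from rfl, key]
    by_cases hx : x - 1 = i ∧ y = j
    · have hx' : x = i + 1 := by rw [← hx.1]; exact (sub_add_cancel x 1).symm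
      simp [hn1, Prod.ext_iff, hx.1, hx.2, hx']
    · by_cases hx2 : x - 1 = i + 1 ∧ y = j
      · have hx' : x = i + 1 + 1 := by rw [← hx2.1]; exact (sub_add_cancel x 1).symm
        have : ¬ (x = i + 1) := by rw [hx']; intro h; exact hadd (i+1) h
        simp [hn1, Prod.ext_iff, hx2.1, hx2.2, hx', this, Ne.symm (hadd i)]
      · have : ¬ (x = i + 1 ∧ y = j) := by
          rintro ⟨h1, h2⟩; exact hx ⟨by rw [h1]; exact add_sub_cancel_right i 1, h2⟩
        simp [hn1, Prod.ext_iff, hx, hx2, this]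
  · -- c = 3, flip = ((x+1, y), 2)
    rw [show GridWalk.flip n ((x, y), (⟨3, by norm_num⟩ : Fin 4)) = ((x + 1, y), 2) from rfl, key]
    by_cases hx : x + 1 = i + 1 ∧ y = j
    · have hx' : x = i := by have := hx.1; exact add_right_cancel this
      simp [hn1, Prod.ext_iff, hx.1, hx.2, hx']
    · by_cases hx2 : x + 1 = i ∧ y = j
      · have : ¬ (x = i) := by
          intro h; rw [h] at hx2; exact hadd i hx2.1
        simp [hn1, Prod.ext_iff, hx2.1, hx2.2, this, Ne.symm (hadd i)]
      · have : ¬ (x = i ∧ y = j) := by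
          rintro ⟨h1, h2⟩; exact hx ⟨by rw [h1], h2⟩
        simp [hn1, Prod.ext_iff, hx, hx2, this]
end

section
/- Consider the discrete-time quantum walk search on the n×n torus grid (N = n² vertices, n ≥ 3) with marked set M = {(i,j), (i+1,j)} consisting of two horizontally adjacent vertices. Let ψ(0) be the uniform initial state with all 4N amplitudes equal to 1/√(4N), and let ψ(t) = (U′)^t ψ(0). Then for every t ≥ 0, the probability of finding a marked vertex p_M(t) = Σ_{(x,y)∈M} Σ_c |ψ(t)(x,y,c)|² satisfies p_M(t) ≤ (8√3 + 14)/N; in particular p_M(t) = O(1/N). -/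
variable {n : ℕ} [NeZero n]

lemma gridFlip_flip (e : (Fin n × Fin n) × Fin 4) : GridWalk.flip n (GridWalk.flip n e) = e := by
  obtain ⟨⟨x, y⟩, c⟩ := e
  fin_cases c <;> simp [GridWalk.flip]

noncomputable def phi (i j : Fin n) (α : ℂ) (e : (Fin n × Fin n) × Fin 4) : ℂ :=
  if e = ((i, j), (3 : Fin 4)) ∨ e = ((i + 1, j), (2 : Fin 4)) then -3 * α else α

lemma phi_flip (i j : Fin n) (α : ℂ) (e : (Fin n × Fin n) × Fin 4) :
    phi i j α (GridWalk.flip n e) = phi i j α e := by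
  obtain ⟨⟨x, y⟩, c⟩ := e
  fin_cases c <;>
    simp [GridWalk.flip, phi, Prod.ext_iff, sub_eq_iff_eq_add, add_left_inj]

lemma coin_query_phi (h1 : i ≠ i + 1) (j : Fin n) (α : ℂ) :
    GridWalk.coin n (GridWalk.query n {(i, j), (i + 1, j)} (phi i j α)) = phi i j α := by
  funext e
  obtain ⟨v, c⟩ := e
  simp only [GridWalk.coin, GridWalk.query]
  by_cases hv : v ∈ ({(i, j), (i + 1, j)} : Finset (Fin n × Fin n))
  · rcases Finset.mem_insert.mp hv with h | h
    · subst h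
      rw [Fin.sum_univ_four]
      simp [hv, phi, Prod.ext_iff, h1]
      ring
    · rw [Finset.mem_singleton] at h
      subst h
      rw [Fin.sum_univ_four]
      simp [hv, phi, Prod.ext_iff, h1.symm]
      ring
  · have hφ : ∀ c' : Fin 4, phi i j α (v, c') = α := by
      intro c'
      have h1 : v ≠ (i, j) := by
        intro h; exact hv (by simp [h])
      have h2 : v ≠ (i + 1, j) := by
        intro h; exact hv (by simp [h])
      simp [phi, Prod.ext_iff, h1, h2]
    rw [Fin.sum_univ_four]
    simp [hv, hφ]
    ring

lemma phi_fixed (h1 : i ≠ i + 1) (j : Fin n) (α : ℂ) :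
    GridWalk.step n {(i, j), (i + 1, j)} (phi i j α) = phi i j α := by
  funext e
  rw [GridWalk.step, GridWalk.shift, coin_query_phi h1, phi_flip]

noncomputable def tot (ψ : (Fin n × Fin n) × Fin 4 → ℂ) : ℝ :=
  ∑ e : (Fin n × Fin n) × Fin 4, ‖ψ e‖ ^ 2

lemma coin4 (a b c d : ℂ) :
    Complex.normSq ((1/2:ℂ)*(a+b+c+d) - a) + Complex.normSq ((1/2:ℂ)*(a+b+c+d) - b)
      + Complex.normSq ((1/2:ℂ)*(a+b+c+d) - c) + Complex.normSq ((1/2:ℂ)*(a+b+c+d) - d)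
    = Complex.normSq a + Complex.normSq b + Complex.normSq c + Complex.normSq d := by
  simp [Complex.normSq_apply, Complex.add_re, Complex.add_im, Complex.sub_re, Complex.sub_im,
    Complex.mul_re, Complex.mul_im, Complex.div_re, Complex.div_im]
  ring

lemma tot_step (M : Finset (Fin n × Fin n)) (ψ : (Fin n × Fin n) × Fin 4 → ℂ) :
    tot (GridWalk.step n M ψ) = tot ψ := by
  have hshift : ∀ χ : (Fin n × Fin n) × Fin 4 → ℂ, tot (GridWalk.shift n χ) = tot χ := by
    intro χ
    exact Fintype.sum_equiv (Function.Involutive.toPerm _ gridFlip_flip) _ _ (fun e => rfl)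
  have hquery : tot (GridWalk.query n M ψ) = tot ψ := by
    refine Finset.sum_congr rfl fun e _ => ?_
    by_cases h : e.1 ∈ M <;> simp [GridWalk.query, h]
  have hcoin : ∀ χ : (Fin n × Fin n) × Fin 4 → ℂ, tot (GridWalk.coin n χ) = tot χ := by
    intro χ
    unfold tot
    rw [Fintype.sum_prod_type (f := fun e => ‖GridWalk.coin n χ e‖ ^ 2),
      Fintype.sum_prod_type (f := fun e => ‖χ e‖ ^ 2)]
    refine Finset.sum_congr rfl fun v _ => ?_
    simp only [GridWalk.coin, Complex.sq_norm, Fin.sum_univ_four]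
    exact coin4 _ _ _ _
  rw [GridWalk.step, hshift, hcoin, hquery]

lemma step_add (M : Finset (Fin n × Fin n)) (f g : (Fin n × Fin n) × Fin 4 → ℂ) :
    GridWalk.step n M (fun e => f e + g e)
      = fun e => GridWalk.step n M f e + GridWalk.step n M g e := by
  funext e
  simp only [GridWalk.step, GridWalk.shift, GridWalk.coin, GridWalk.query]
  by_cases h : (GridWalk.flip n e).1 ∈ M <;>
    simp [h, Finset.sum_add_distrib] <;> ring

lemma iterate_decomp (M : Finset (Fin n × Fin n)) (φ ψ0 : (Fin n × Fin n) × Fin 4 → ℂ)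
    (hφ : GridWalk.step n M φ = φ) (t : ℕ) :
    (GridWalk.step n M)^[t] ψ0
      = fun e => φ e + (GridWalk.step n M)^[t] (fun e' => ψ0 e' - φ e') e := by
  induction t with
  | zero => funext e; simp
  | succ t ih =>
      rw [Function.iterate_succ_apply', Function.iterate_succ_apply', ih]
      have : (fun e => φ e + (GridWalk.step n M)^[t] (fun e' => ψ0 e' - φ e') e)
          = fun e => φ e + ((GridWalk.step n M)^[t] (fun e' => ψ0 e' - φ e')) e := rfl
      rw [this, step_add, hφ]

lemma tot_iterate (M : Finset (Fin n × Fin n)) (ψ : (Fin n × Fin n) × Fin 4 → ℂ) (t : ℕ) :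
    tot ((GridWalk.step n M)^[t] ψ) = tot ψ := by
  induction t with
  | zero => simp
  | succ t ih => rw [Function.iterate_succ_apply', tot_step, ih]


/-- For two horizontally adjacent marked vertices `(i, j)` and `(i+1, j)` on the `n × n`
torus grid (`N = n²`), the probability of finding a marked vertex after any number of
steps of the search algorithm, starting from the uniform state, is at most
`(8√3 + 14)/N`; in particular it is `O(1/N)`. -/
theorem grid_two_adjacent_marked_prob_bound (n : ℕ) [NeZero n] (hn : 3 ≤ n)
    (i j : Fin n) :
    ∀ t : ℕ,
      ∑ v ∈ ({(i, j), (i + 1, j)} : Finset (Fin n × Fin n)), ∑ c : Fin 4,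
        ‖(GridWalk.step n {(i, j), (i + 1, j)})^[t]
            (fun _ => ((1 / Real.sqrt (4 * n ^ 2) : ℝ) : ℂ)) (v, c)‖ ^ 2
      ≤ (8 * Real.sqrt 3 + 14) / (n ^ 2 : ℝ) := by
  intro t
  have h10 : (1 : Fin n) ≠ 0 := by
    intro h
    have h' := congrArg Fin.val h
    rw [Fin.val_one'] at h'
    simp at h'
    omega
  have hii : i ≠ i + 1 := fun h => h10 (left_eq_add.mp h)
  have hnR : (0 : ℝ) < (n : ℝ) := by
    exact_mod_cast Nat.lt_of_lt_of_le (by norm_num) hn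
  set a : ℝ := 1 / Real.sqrt (4 * (n : ℝ) ^ 2) with ha_def
  set α : ℂ := ((a : ℝ) : ℂ) with hα_def
  have ha : 0 ≤ a := by positivity
  have ha2 : a ^ 2 = 1 / (4 * (n : ℝ) ^ 2) := by
    rw [ha_def, div_pow, one_pow, Real.sq_sqrt (by positivity)]
  have habsα : ‖α‖ = a := by
    rw [hα_def, Complex.norm_real, Real.norm_eq_abs, abs_of_nonneg ha]
  have habs3α : ‖-3 * α‖ = 3 * a := by
    have h3 : (-3 : ℂ) * α = ((-3 * a : ℝ) : ℂ) := by push_cast; ring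
    rw [h3, Complex.norm_real, Real.norm_eq_abs, abs_of_nonpos (by nlinarith), neg_mul]; ring
  set M : Finset (Fin n × Fin n) := {(i, j), (i + 1, j)} with hM_def
  set d : (Fin n × Fin n) × Fin 4 → ℂ :=
    (GridWalk.step n M)^[t] (fun e' => (fun _ => α) e' - phi i j α e') with hd_def
  have hdecomp := iterate_decomp M (phi i j α) (fun _ => α) (phi_fixed hii j α) t
  rw [hdecomp]
  simp only []
  rw [← Finset.sum_product (s := M) (t := (Finset.univ : Finset (Fin 4)))
      (f := fun p => ‖phi i j α p + d p‖ ^ 2)]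
  set s : Finset ((Fin n × Fin n) × Fin 4) := M ×ˢ Finset.univ with hs_def
  -- facts about the two special darts
  have he12 : ((i, j), (3 : Fin 4)) ≠ ((i + 1, j), (2 : Fin 4)) := by
    simp [Prod.ext_iff]
  have hvne : (i, j) ∉ ({(i + 1, j)} : Finset (Fin n × Fin n)) := by
    simp [Prod.ext_iff, hii]
  -- A = ∑ |phi|² over marked darts
  have hA : ∑ p ∈ s, ‖phi i j α p‖ ^ 2 = 24 * a ^ 2 := by
    rw [hs_def, Finset.sum_product, hM_def, Finset.sum_insert hvne,
      Finset.sum_singleton, Fin.sum_univ_four, Fin.sum_univ_four]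
    simp only [phi, Prod.ext_iff]
    simp [hii, hii.symm, habsα, habs3α]
    ring
  -- total norm of the perturbation
  have htotδ : tot (fun e' => (fun _ => α) e' - phi i j α e') = 32 * a ^ 2 := by
    unfold tot
    rw [← Finset.sum_subset
      (Finset.subset_univ
        ({((i, j), (3 : Fin 4)), ((i + 1, j), (2 : Fin 4))} :
          Finset ((Fin n × Fin n) × Fin 4)))
      (by
        intro e _ he
        simp only [Finset.mem_insert, Finset.mem_singleton] at he
        push_neg at he
        simp [phi, he.1, he.2])]
    rw [Finset.sum_insert (by simp [he12]), Finset.sum_singleton]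
    have h4 : ∀ z : ℂ, z = α - (-3 * α) → ‖z‖ = 4 * a := by
      intro z hz
      have : z = ((4 * a : ℝ) : ℂ) := by rw [hz, hα_def]; push_cast; ring
      rw [this, Complex.norm_real, Real.norm_eq_abs, abs_of_nonneg (by linarith)]
    have hv1 : phi i j α ((i, j), (3 : Fin 4)) = -3 * α := by simp [phi]
    have hv2 : phi i j α ((i + 1, j), (2 : Fin 4)) = -3 * α := by simp [phi]
    simp only [hv1, hv2]
    rw [h4 _ rfl]
    ring
  have hD : ∑ p ∈ s, ‖d p‖ ^ 2 ≤ 32 * a ^ 2 := by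
    have hsub : ∑ p ∈ s, ‖d p‖ ^ 2
        ≤ ∑ p : (Fin n × Fin n) × Fin 4, ‖d p‖ ^ 2 :=
      Finset.sum_le_sum_of_subset_of_nonneg (Finset.subset_univ s)
        (fun p _ _ => by positivity)
    have htot : (∑ p : (Fin n × Fin n) × Fin 4, ‖d p‖ ^ 2) = 32 * a ^ 2 := by
      have := tot_iterate M (fun e' => (fun _ => α) e' - phi i j α e') t
      rw [htotδ] at this
      exact this
    linarith
  -- Cauchy–Schwarz
  set B : ℝ := ∑ p ∈ s, ‖phi i j α p‖ * ‖d p‖ with hB_def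
  have hBnn : 0 ≤ B := Finset.sum_nonneg fun p _ => by positivity
  have hCS : B ^ 2 ≤ (24 * a ^ 2) * (32 * a ^ 2) := by
    have h := Finset.sum_mul_sq_le_sq_mul_sq s
      (fun p => ‖phi i j α p‖) (fun p => ‖d p‖)
    rw [← hB_def] at h
    have hAnn : (0 : ℝ) ≤ 24 * a ^ 2 := by positivity
    calc B ^ 2 ≤ (∑ p ∈ s, ‖phi i j α p‖ ^ 2) * ∑ p ∈ s, ‖d p‖ ^ 2 := h
      _ = (24 * a ^ 2) * ∑ p ∈ s, ‖d p‖ ^ 2 := by rw [hA]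
      _ ≤ (24 * a ^ 2) * (32 * a ^ 2) := by
          exact mul_le_mul_of_nonneg_left hD hAnn
  have hs3 : Real.sqrt 3 ^ 2 = 3 := Real.sq_sqrt (by norm_num)
  have hBle : B ≤ 16 * Real.sqrt 3 * a ^ 2 := by
    nlinarith [Real.sqrt_nonneg 3, sq_nonneg (B - 16 * Real.sqrt 3 * a ^ 2), sq_nonneg a,
      sq_nonneg (a ^ 2), mul_nonneg (Real.sqrt_nonneg 3) (sq_nonneg a)]
  -- pointwise triangle inequality
  have hpt : ∀ p ∈ s, ‖phi i j α p + d p‖ ^ 2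
      ≤ ‖phi i j α p‖ ^ 2
        + 2 * (‖phi i j α p‖ * ‖d p‖) + ‖d p‖ ^ 2 := by
    intro p _
    have h := norm_add_le (phi i j α p) (d p)
    nlinarith [norm_nonneg (phi i j α p + d p), norm_nonneg (phi i j α p),
      norm_nonneg (d p)]
  have hfinal : (8 * Real.sqrt 3 + 14) / ((n : ℝ) ^ 2)
      = 24 * a ^ 2 + 2 * (16 * Real.sqrt 3 * a ^ 2) + 32 * a ^ 2 := by
    rw [ha2]
    field_simp
    ring
  calc ∑ p ∈ s, ‖phi i j α p + d p‖ ^ 2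
      ≤ ∑ p ∈ s, (‖phi i j α p‖ ^ 2
          + 2 * (‖phi i j α p‖ * ‖d p‖)
          + ‖d p‖ ^ 2) := Finset.sum_le_sum hpt
    _ = (∑ p ∈ s, ‖phi i j α p‖ ^ 2) + 2 * B
        + ∑ p ∈ s, ‖d p‖ ^ 2 := by
        rw [Finset.sum_add_distrib, Finset.sum_add_distrib, hB_def, Finset.mul_sum]
    _ ≤ 24 * a ^ 2 + 2 * (16 * Real.sqrt 3 * a ^ 2) + 32 * a ^ 2 := by
        rw [hA]; linarith
    _ = (8 * Real.sqrt 3 + 14) / ((n : ℝ) ^ 2) := hfinal.symm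
end

section
/- Optimization bound used in the probability estimate: let d ≥ 2 be a natural number, a > 0 a real, and let x₁, x₂ be real numbers satisfying (d−1)x₁² + x₂² = a²d². Then (d−1)(a + x₁)² + ((d−1)a + x₂)² ≤ a²(2√((d−1)d³) + d(2d−1)). -/
/-- Constrained maximization bound used in the probability estimate: if
`(d−1)x₁² + x₂² = a²d²` with `d ≥ 2` and `a > 0`, then
`(d−1)(a+x₁)² + ((d−1)a+x₂)² ≤ a²(2√((d−1)d³) + d(2d−1))`. -/
theorem perturbation_maximization_bound (d : ℕ) (hd : 2 ≤ d) (a : ℝ) (ha : 0 < a)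
    (x₁ x₂ : ℝ) (h : ((d : ℝ) - 1) * x₁ ^ 2 + x₂ ^ 2 = a ^ 2 * (d : ℝ) ^ 2) :
    ((d : ℝ) - 1) * (a + x₁) ^ 2 + (((d : ℝ) - 1) * a + x₂) ^ 2
      ≤ a ^ 2 * (2 * Real.sqrt (((d : ℝ) - 1) * (d : ℝ) ^ 3) +
          (d : ℝ) * (2 * (d : ℝ) - 1)) := by
  have hd2 : (2:ℝ) ≤ (d:ℝ) := by exact_mod_cast hd
  set s := Real.sqrt (((d:ℝ)-1) * (d:ℝ)^3) with hs
  have hnn : 0 ≤ ((d:ℝ)-1) * (d:ℝ)^3 := mul_nonneg (by linarith) (by positivity)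
  have hs2 : s^2 = ((d:ℝ)-1) * (d:ℝ)^3 := Real.sq_sqrt hnn
  have hs0 : 0 ≤ s := Real.sqrt_nonneg _
  have hsa : 0 ≤ s * a := mul_nonneg hs0 ha.le
  -- Cauchy–Schwarz step
  have hcs : (((d:ℝ)-1)*(x₁+x₂))^2 ≤ (s*a)^2 := by
    nlinarith [sq_nonneg (x₂ - ((d:ℝ)-1)*x₁), sq_nonneg x₁, sq_nonneg x₂]
  have key : ((d:ℝ)-1)*(x₁+x₂) ≤ s * a := by nlinarith [hsa, hcs]
  nlinarith [key, ha, mul_pos ha ha]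
end
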